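/- arXiv:2604.05054 — 3 statements merged into one kernel-verified Lean document; each statement's English description precedes it below -/
import Mathlib

section
/- Let T > 0, let m ≥ 1 be a positive integer, let c > 0, and let θ : [0,T] → [0,∞) be a continuous non-increasing function such that θ(t₁)^{2m−1} (θ(t₂) − θ(t₁)) ≤ −c (t₂ − t₁) θ(t₂)^{2m} for all 0 ≤ t₁ ≤ t₂ ≤ T. Then θ(t) ≤ e^{−ct} θ(0) for every t ∈ [0,T]. -/
set_option maxHeartbeats 1000000


/-- Lemma on non-increasing functions satisfying a power-type dissipation inequality:
exponential decay. -/
theorem stmt_2 (T : ℝ) (hT : 0 < T) (m : ℕ) (hm : 1 ≤ m) (c : ℝ) (hc : 0 < c)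
    (θ : ℝ → ℝ) (hcont : ContinuousOn θ (Set.Icc 0 T))
    (hnonneg : ∀ t ∈ Set.Icc 0 T, 0 ≤ θ t)
    (hmono : AntitoneOn θ (Set.Icc 0 T))
    (hineq : ∀ t₁ t₂ : ℝ, 0 ≤ t₁ → t₁ ≤ t₂ → t₂ ≤ T →
      θ t₁ ^ (2 * m - 1) * (θ t₂ - θ t₁) ≤ -c * (t₂ - t₁) * θ t₂ ^ (2 * m)) :
    ∀ t ∈ Set.Icc 0 T, θ t ≤ Real.exp (-c * t) * θ 0 := by
  intro t ht
  obtain ⟨ht0, htT⟩ := ht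
  have hθ0 : 0 ≤ θ 0 := hnonneg 0 ⟨le_refl 0, hT.le⟩
  rcases eq_or_lt_of_le ht0 with h0 | h0
  · rw [← h0]; simp
  rcases le_or_gt (θ t) 0 with hθt | hθt
  · exact hθt.trans (by positivity)
  have hsub : Set.Icc (0:ℝ) t ⊆ Set.Icc 0 T := Set.Icc_subset_Icc le_rfl htT
  have hθpos : ∀ s ∈ Set.Icc (0:ℝ) t, 0 < θ s := fun s hs =>
    hθt.trans_le (hmono (hsub hs) ⟨ht0, htT⟩ hs.2)
  have huc := (isCompact_Icc : IsCompact (Set.Icc (0:ℝ) T)).uniformContinuousOn_of_continuous hcont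
  rw [Metric.uniformContinuousOn_iff] at huc
  have key : ∀ l : ℝ, 0 < l → l < 1 → θ t * Real.exp (c * l ^ (2*m) * t) ≤ θ 0 := by
    intro l hl0 hl1
    have hl1' : 0 < 1 - l := by linarith
    obtain ⟨δ, hδ, hδ'⟩ := huc ((1-l) * θ t) (by positivity)
    set a := c * l ^ (2*m-1) with ha
    have ha0 : 0 < a := by positivity
    obtain ⟨n, hn⟩ := exists_nat_gt (max (t/δ) (l*a*t/(1-l)))
    have hn1 : t/δ < n := lt_of_le_of_lt (le_max_left _ _) hn
    have hn2 : l*a*t/(1-l) < n := lt_of_le_of_lt (le_max_right _ _) hn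
    have hn0 : 0 < (n:ℝ) := lt_trans (by positivity) hn1
    set h := t / n with hh
    have hhpos : 0 < h := div_pos h0 hn0
    have hnh : (n:ℝ) * h = t := by
      rw [hh]; field_simp
    have hhδ : h < δ := by
      rw [hh, div_lt_iff₀ hn0]
      rw [div_lt_iff₀ hδ] at hn1
      linarith [hn1]
    have hlah : l * a * h ≤ 1 - l := by
      rw [div_lt_iff₀ hl1'] at hn2
      rw [hh, ← mul_div_assoc, div_le_iff₀ hn0]
      nlinarith [hn2]
    -- exponential vs linear bound for one step
    have hexp : Real.exp (l*a*h) ≤ 1 + a*h := by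
      have hx : 0 ≤ l*a*h := by positivity
      have hpos : 0 < 1 - l*a*h := by linarith
      have h1 : 1 - l*a*h ≤ Real.exp (-(l*a*h)) := by
        have := Real.add_one_le_exp (-(l*a*h)); linarith
      have h2 : Real.exp (l*a*h) * (1 - l*a*h) ≤ 1 := by
        calc Real.exp (l*a*h) * (1 - l*a*h)
            ≤ Real.exp (l*a*h) * Real.exp (-(l*a*h)) :=
              mul_le_mul_of_nonneg_left h1 (Real.exp_nonneg _)
          _ = 1 := by rw [← Real.exp_add]; simp
      have e1 : Real.exp (l*a*h) ≤ 1/(1-l*a*h) := by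
        rw [le_div_iff₀ hpos]; exact h2
      refine e1.trans ?_
      rw [div_le_iff₀ hpos]
      have hah : 0 ≤ a*h := by positivity
      nlinarith [mul_nonneg hah (show (0:ℝ) ≤ 1 - l - l*(a*h) by nlinarith [hlah]), hah]
    -- one step of the discrete Gronwall inequality
    have step : ∀ k : ℕ, k + 1 ≤ n →
        θ (((k:ℝ)+1)*h) * Real.exp (l*a*h) ≤ θ ((k:ℝ)*h) := by
      intro k hk
      have hkn : ((k:ℝ)+1) ≤ (n:ℝ) := by exact_mod_cast hk
      have hkn' : (k:ℝ) ≤ (n:ℝ) := by linarith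
      have hs1 : (k:ℝ)*h ∈ Set.Icc (0:ℝ) t := by
        refine ⟨by positivity, ?_⟩
        calc (k:ℝ)*h ≤ (n:ℝ)*h := mul_le_mul_of_nonneg_right hkn' hhpos.le
          _ = t := hnh
      have hs2 : ((k:ℝ)+1)*h ∈ Set.Icc (0:ℝ) t := by
        refine ⟨by positivity, ?_⟩
        calc ((k:ℝ)+1)*h ≤ (n:ℝ)*h := mul_le_mul_of_nonneg_right hkn hhpos.le
          _ = t := hnh
      have hp1 : 0 < θ ((k:ℝ)*h) := hθpos _ hs1
      have hp2 : 0 < θ (((k:ℝ)+1)*h) := hθpos _ hs2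
      have hθt1 : θ t ≤ θ ((k:ℝ)*h) := hmono (hsub hs1) ⟨ht0, htT⟩ hs1.2
      have hdist : dist ((k:ℝ)*h) (((k:ℝ)+1)*h) < δ := by
        rw [Real.dist_eq]
        rw [abs_of_nonpos (by nlinarith [hhpos])]
        nlinarith [hhδ]
      have hclose := hδ' _ (hsub hs1) _ (hsub hs2) hdist
      rw [Real.dist_eq] at hclose
      have hmon12 : θ (((k:ℝ)+1)*h) ≤ θ ((k:ℝ)*h) :=
        hmono (hsub hs1) (hsub hs2) (by nlinarith [hhpos])
      have hll : l * θ ((k:ℝ)*h) ≤ θ (((k:ℝ)+1)*h) := by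
        rw [abs_of_nonneg (by linarith)] at hclose
        nlinarith [hθt1]
      have hll0 : 0 ≤ l * θ ((k:ℝ)*h) := by positivity
      have hi := hineq ((k:ℝ)*h) (((k:ℝ)+1)*h) hs1.1 (by nlinarith [hhpos])
        (hs2.2.trans htT)
      have p1 : 0 < θ ((k:ℝ)*h) ^ (2*m-1) := pow_pos hp1 _
      have p2 : (l * θ ((k:ℝ)*h)) ^ (2*m-1) * θ (((k:ℝ)+1)*h) ≤ θ (((k:ℝ)+1)*h) ^ (2*m) := by
        have h2m : 2*m = (2*m-1) + 1 := by omega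
        rw [h2m, pow_succ]
        have := pow_le_pow_left₀ hll0 hll (2*m-1)
        exact mul_le_mul_of_nonneg_right this hp2.le
      have key2 : θ ((k:ℝ)*h) ^ (2*m-1) * (θ (((k:ℝ)+1)*h) - θ ((k:ℝ)*h))
          ≤ θ ((k:ℝ)*h) ^ (2*m-1) * (-(a*h) * θ (((k:ℝ)+1)*h)) := by
        have hd : ((k:ℝ)+1)*h - (k:ℝ)*h = h := by ring
        calc θ ((k:ℝ)*h) ^ (2*m-1) * (θ (((k:ℝ)+1)*h) - θ ((k:ℝ)*h))
            ≤ -c * (((k:ℝ)+1)*h - (k:ℝ)*h) * θ (((k:ℝ)+1)*h) ^ (2*m) := hi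
          _ ≤ -c * h * ((l * θ ((k:ℝ)*h)) ^ (2*m-1) * θ (((k:ℝ)+1)*h)) := by
              rw [hd]
              have hch : 0 ≤ c * h := by positivity
              nlinarith [p2, hch]
          _ = θ ((k:ℝ)*h) ^ (2*m-1) * (-(a*h) * θ (((k:ℝ)+1)*h)) := by
              rw [mul_pow, ha]; ring
      have key3 : θ (((k:ℝ)+1)*h) - θ ((k:ℝ)*h) ≤ -(a*h) * θ (((k:ℝ)+1)*h) :=
        le_of_mul_le_mul_left key2 p1
      calc θ (((k:ℝ)+1)*h) * Real.exp (l*a*h)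
          ≤ θ (((k:ℝ)+1)*h) * (1 + a*h) := mul_le_mul_of_nonneg_left hexp hp2.le
        _ ≤ θ ((k:ℝ)*h) := by nlinarith [key3]
    -- iterate
    have ind : ∀ k : ℕ, k ≤ n → θ ((k:ℝ)*h) * Real.exp (l*a*((k:ℝ)*h)) ≤ θ 0 := by
      intro k
      induction k with
      | zero => intro _; norm_num
      | succ k ih =>
        intro hk1
        have hk : k ≤ n := Nat.le_of_succ_le hk1
        have hstep := step k hk1
        have hcast : ((k+1 : ℕ) : ℝ) = (k:ℝ) + 1 := by push_cast; ring
        rw [hcast]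
        calc θ (((k:ℝ)+1)*h) * Real.exp (l*a*(((k:ℝ)+1)*h))
            = (θ (((k:ℝ)+1)*h) * Real.exp (l*a*h)) * Real.exp (l*a*((k:ℝ)*h)) := by
              rw [show l*a*(((k:ℝ)+1)*h) = l*a*h + l*a*((k:ℝ)*h) by ring, Real.exp_add]
              ring
          _ ≤ θ ((k:ℝ)*h) * Real.exp (l*a*((k:ℝ)*h)) :=
              mul_le_mul_of_nonneg_right hstep (Real.exp_nonneg _)
          _ ≤ θ 0 := ih hk
    have hfin := ind n le_rfl
    rw [hnh] at hfin
    have hla : l * a = c * l ^ (2*m) := by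
      have hp : l ^ (2*m) = l ^ (2*m-1) * l := by
        rw [← pow_succ]; congr 1; omega
      rw [ha, hp]; ring
    calc θ t * Real.exp (c * l ^ (2*m) * t) = θ t * Real.exp (l*a*t) := by rw [hla]
      _ ≤ θ 0 := hfin
  -- pass to the limit l → 1⁻
  haveI : (nhdsWithin (1:ℝ) (Set.Ioo (0:ℝ) 1)).NeBot :=
    right_nhdsWithin_Ioo_neBot (show (0:ℝ) < 1 by norm_num)
  have hconv : Filter.Tendsto (fun l : ℝ => θ t * Real.exp (c * l ^ (2*m) * t))
      (nhdsWithin 1 (Set.Ioo (0:ℝ) 1)) (nhds (θ t * Real.exp (c * t))) := by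
    apply Filter.Tendsto.mono_left _ nhdsWithin_le_nhds
    have hcontf : Continuous fun l : ℝ => θ t * Real.exp (c * l ^ (2*m) * t) := by
      continuity
    have := hcontf.tendsto 1
    simpa using this
  have hle : θ t * Real.exp (c * t) ≤ θ 0 := by
    refine le_of_tendsto hconv ?_
    filter_upwards [self_mem_nhdsWithin] with l hl
    exact key l hl.1 hl.2
  have hepos : 0 < Real.exp (c * t) := Real.exp_pos _
  rw [neg_mul, Real.exp_neg, ← div_eq_inv_mul, le_div_iff₀ hepos]
  exact hle
end

section
/- Let T > 0, let c > 0, and let V : [0,T] → [0,∞) be continuous. Assume that for every nonnegative continuously differentiable function φ with compact support contained in the open interval (0,T), one has ∫_0^T V(t) φ'(t) dt ≥ c ∫_0^T V(t) φ(t) dt. Then V(t) ≤ V(0) e^{−ct} for every t ∈ [0,T]. -/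
open MeasureTheory

open MeasureTheory Real Set Filter Topology Function

noncomputable def gd : ℝ → ℝ := deriv Real.smoothTransition

lemma gd_cont : Continuous gd :=
  (Real.smoothTransition.contDiff (n := 1)).continuous_deriv le_rfl

lemma gtr_hasDerivAt (y : ℝ) : HasDerivAt Real.smoothTransition (gd y) y :=
  ((Real.smoothTransition.contDiff (n := 1)).differentiable (by simp) y).hasDerivAt

lemma gd_zero {x : ℝ} (hx : x < 0 ∨ 1 < x) : gd x = 0 := by
  rcases hx with h | h
  · have he : Real.smoothTransition =ᶠ[nhds x] (fun _ => (0:ℝ)) := by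
      filter_upwards [Iio_mem_nhds h] with y hy
      exact Real.smoothTransition.zero_of_nonpos hy.le
    simp [gd, he.deriv_eq]
  · have he : Real.smoothTransition =ᶠ[nhds x] (fun _ => (1:ℝ)) := by
      filter_upwards [Ioi_mem_nhds h] with y hy
      exact Real.smoothTransition.one_of_one_le hy.le
    simp [gd, he.deriv_eq]

lemma gd_supp : Function.support gd ⊆ Icc 0 1 := by
  intro x hx
  by_contra hmem
  rcases not_and_or.mp ((mem_Icc (a := (0:ℝ))).not.mp hmem) with h | h
  · exact hx (gd_zero (Or.inl (lt_of_not_ge h)))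
  · exact hx (gd_zero (Or.inr (lt_of_not_ge h)))

lemma gd_hcs : HasCompactSupport gd :=
  HasCompactSupport.intro isCompact_Icc fun x hx => by
    by_contra h; exact hx (gd_supp h)

lemma gd_integrable : Integrable gd :=
  gd_cont.integrable_of_hasCompactSupport gd_hcs

lemma gd_integral : ∫ x, gd x = 1 := by
  have hsupp : Function.support gd ⊆ Ioc (-1 : ℝ) 2 :=
    gd_supp.trans (fun x hx => ⟨by linarith [hx.1], by linarith [hx.2]⟩)
  rw [← intervalIntegral.integral_eq_integral_of_support_subset hsupp]
  simp only [gd]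
  rw [intervalIntegral.integral_deriv_eq_sub
      (fun x _ => ((Real.smoothTransition.contDiff (n := 1)).differentiable (by simp)).differentiableAt)
      (gd_cont.intervalIntegrable _ _)]
  rw [Real.smoothTransition.one_of_one_le (by norm_num),
      Real.smoothTransition.zero_of_nonpos (by norm_num)]
  norm_num

open MeasureTheory Real Set Filter Topology Function

lemma subst_lemma (W : ℝ → ℝ) (a : ℝ) {b : ℝ} (hb : b ≠ 0) :
    ∫ x, W x * gd ((x - a) / b) = |b| * ∫ u, W (a + b * u) * gd u := by
  have h1 : ∫ x, W x * gd ((x - a) / b) = ∫ y, W (a + y) * gd (y / b) := by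
    rw [← MeasureTheory.integral_sub_right_eq_self (fun y => W (a + y) * gd (y / b)) a]
    congr 1; ext x
    rw [add_sub_cancel]
  have h2 : ∫ u, W (a + b * u) * gd u = |b⁻¹| * ∫ y, W (a + y) * gd (y / b) := by
    rw [← smul_eq_mul, ← MeasureTheory.Measure.integral_comp_mul_left (fun y => W (a + y) * gd (y / b)) b]
    congr 1; ext u
    rw [mul_div_cancel_left₀ _ hb]
  rw [h1, h2, abs_inv]
  field_simp

lemma integrable_mul_gd {W : ℝ → ℝ} (hW : Continuous W) (a : ℝ) {b : ℝ} (hb : b ≠ 0) :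
    Integrable (fun x => W x * gd ((x - a) / b)) := by
  apply Continuous.integrable_of_hasCompactSupport
  · exact hW.mul (gd_cont.comp ((continuous_id.sub continuous_const).div_const b))
  · have h : HasCompactSupport (fun x => gd ((x - a) / b)) := by
      apply HasCompactSupport.intro (isCompact_Icc (a := a - |b|) (b := a + |b|))
      intro x hx
      apply gd_zero
      by_contra hmem
      push_neg at hmem
      have h1 : (x - a) / b ∈ Icc (0:ℝ) 1 := ⟨hmem.1, hmem.2⟩
      have h2 : |(x - a) / b| ≤ 1 := abs_le.mpr ⟨by linarith [h1.1], h1.2⟩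
      rw [abs_div] at h2
      have hb' : 0 < |b| := abs_pos.mpr hb
      have : |x - a| ≤ |b| := by
        rw [div_le_one hb'] at h2; exact h2
      rcases abs_le.mp this with ⟨hl, hr⟩
      exact hx ⟨by linarith, by linarith⟩
    exact h.mul_left

open MeasureTheory Real Set Filter Topology Function

lemma moll_tendsto {W : ℝ → ℝ} (hW : Continuous W) (p : ℝ) (a b : ℝ → ℝ)
    (ha : Tendsto a (𝓝[>] (0:ℝ)) (𝓝 p)) (hb : Tendsto b (𝓝[>] (0:ℝ)) (𝓝 0)) :
    Tendsto (fun ε => ∫ u, W (a ε + b ε * u) * gd u) (𝓝[>] (0:ℝ)) (𝓝 (W p)) := by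
  obtain ⟨C, hC⟩ : ∃ C, ∀ x ∈ Icc (p - 2) (p + 2), ‖W x‖ ≤ C :=
    isCompact_Icc.exists_bound_of_continuousOn hW.continuousOn
  have key : Tendsto (fun ε => ∫ u, W (a ε + b ε * u) * gd u) (𝓝[>] (0:ℝ))
      (𝓝 (∫ u, W p * gd u)) := by
    apply tendsto_integral_filter_of_dominated_convergence (fun u => C * |gd u|)
    · filter_upwards with ε
      exact ((hW.comp (continuous_const.add (continuous_const.mul continuous_id))).mul
        gd_cont).aestronglyMeasurable
    · have h1 : ∀ᶠ ε in 𝓝[>] (0:ℝ), |a ε - p| ≤ 1 := by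
        have := ha (Metric.closedBall_mem_nhds p one_pos)
        filter_upwards [this] with ε hε
        simpa [Real.dist_eq] using hε
      have h2 : ∀ᶠ ε in 𝓝[>] (0:ℝ), |b ε| ≤ 1 := by
        have := hb (Metric.closedBall_mem_nhds 0 one_pos)
        filter_upwards [this] with ε hε
        simpa [Real.dist_eq] using hε
      filter_upwards [h1, h2] with ε hε1 hε2
      filter_upwards with u
      rcases eq_or_ne (gd u) 0 with h | h
      · simp [h]
      · have hu : u ∈ Icc (0:ℝ) 1 := gd_supp h
        have hx : a ε + b ε * u ∈ Icc (p - 2) (p + 2) := by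
          have : |b ε * u| ≤ 1 := by
            rw [abs_mul]
            calc |b ε| * |u| ≤ 1 * 1 := by
                  apply mul_le_mul hε2 (abs_le.mpr ⟨by linarith [hu.1], hu.2⟩) (abs_nonneg _) zero_le_one
            _ = 1 := by ring
          rcases abs_le.mp hε1 with ⟨g1, g2⟩
          rcases abs_le.mp this with ⟨g3, g4⟩
          constructor <;> [linarith; linarith]
        calc ‖W (a ε + b ε * u) * gd u‖ = ‖W (a ε + b ε * u)‖ * |gd u| := by
              rw [norm_mul]; rfl
        _ ≤ C * |gd u| := mul_le_mul_of_nonneg_right (hC _ hx) (abs_nonneg _)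
    · exact (gd_integrable.abs).const_mul C
    · filter_upwards with u
      have htend : Tendsto (fun ε => a ε + b ε * u) (𝓝[>] (0:ℝ)) (𝓝 p) := by
        have := ha.add (hb.mul_const u)
        simpa using this
      exact ((hW.continuousAt.tendsto.comp htend).mul tendsto_const_nhds)
  rwa [MeasureTheory.integral_const_mul, gd_integral, mul_one] at key

open MeasureTheory Real Set Filter Topology Function

lemma step_eps {T : ℝ} {W : ℝ → ℝ} (hW : Continuous W)
    (H : ∀ ψ : ℝ → ℝ, ContDiff ℝ 1 ψ → (∀ x, 0 ≤ ψ x) → HasCompactSupport ψ →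
      tsupport ψ ⊆ Ioo 0 T → 0 ≤ ∫ x, W x * deriv ψ x)
    {s t ε : ℝ} (hs : 0 < s) (hε : 0 < ε) (h1 : s + ε ≤ t) (h2 : t + ε < T) :
    ∫ u, W ((t + ε) + (-ε) * u) * gd u ≤ ∫ u, W (s + ε * u) * gd u := by
  have hεne : ε ≠ 0 := hε.ne'
  set ψ : ℝ → ℝ := fun x =>
    Real.smoothTransition ((x - s) / ε) * Real.smoothTransition ((t + ε - x) / ε) with hψdef
  have hψ1 : ContDiff ℝ 1 ψ :=
    ((Real.smoothTransition.contDiff (n := 1)).comp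
        ((contDiff_id.sub contDiff_const).div_const ε)).mul
      ((Real.smoothTransition.contDiff (n := 1)).comp
        ((contDiff_const.sub contDiff_id).div_const ε))
  have hψ2 : ∀ x, 0 ≤ ψ x := fun x =>
    mul_nonneg (Real.smoothTransition.nonneg _) (Real.smoothTransition.nonneg _)
  have hzero : ∀ x, x ∉ Ioo s (t + ε) → ψ x = 0 := by
    intro x hx
    rcases not_and_or.mp ((mem_Ioo).not.mp hx) with h | h
    · have : (x - s) / ε ≤ 0 := div_nonpos_of_nonpos_of_nonneg (by linarith [le_of_not_gt h]) hε.le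
      simp [hψdef, Real.smoothTransition.zero_of_nonpos this]
    · have : (t + ε - x) / ε ≤ 0 := div_nonpos_of_nonpos_of_nonneg (by linarith [le_of_not_gt h]) hε.le
      simp [hψdef, Real.smoothTransition.zero_of_nonpos this]
  have hψ3 : HasCompactSupport ψ :=
    HasCompactSupport.intro (isCompact_Icc (a := s) (b := t + ε)) fun x hx =>
      hzero x fun hmem => hx ⟨hmem.1.le, hmem.2.le⟩
  have hψ4 : tsupport ψ ⊆ Ioo 0 T := by
    have hsub : tsupport ψ ⊆ closure (Ioo s (t + ε)) :=
      closure_mono (Function.support_subset_iff'.mpr hzero)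
    rw [closure_Ioo (by linarith : s ≠ t + ε)] at hsub
    exact hsub.trans fun x hx => ⟨lt_of_lt_of_le hs hx.1, lt_of_le_of_lt hx.2 h2⟩
  have key := H ψ hψ1 hψ2 hψ3 hψ4
  have hdd : ∀ x, HasDerivAt ψ
      (gd ((x - s) / ε) * (1 / ε) * Real.smoothTransition ((t + ε - x) / ε) +
        Real.smoothTransition ((x - s) / ε) * (gd ((t + ε - x) / ε) * (-1 / ε))) x := by
    intro x
    have i1 : HasDerivAt (fun x : ℝ => (x - s) / ε) (1 / ε) x := by
      simpa using ((hasDerivAt_id x).sub_const s).div_const ε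
    have i2 : HasDerivAt (fun x : ℝ => (t + ε - x) / ε) (-1 / ε) x := by
      have h : HasDerivAt (fun x : ℝ => t + ε - x) (0 - 1) x :=
        (hasDerivAt_const x (t + ε)).sub (hasDerivAt_id x)
      simpa using h.div_const ε
    have o1 : HasDerivAt (fun x : ℝ => Real.smoothTransition ((x - s) / ε))
        (gd ((x - s) / ε) * (1 / ε)) x := (gtr_hasDerivAt _).comp x i1
    have o2 : HasDerivAt (fun x : ℝ => Real.smoothTransition ((t + ε - x) / ε))
        (gd ((t + ε - x) / ε) * (-1 / ε)) x := (gtr_hasDerivAt _).comp x i2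
    exact o1.mul o2
  have hpt : ∀ x, W x * deriv ψ x =
      ε⁻¹ * (W x * gd ((x - s) / ε)) - ε⁻¹ * (W x * gd ((x - (t + ε)) / (-ε))) := by
    intro x
    have harg : (x - (t + ε)) / (-ε) = (t + ε - x) / ε := by
      rw [div_neg, ← neg_div, neg_sub]
    have c1 : gd ((x - s) / ε) * Real.smoothTransition ((t + ε - x) / ε) = gd ((x - s) / ε) := by
      rcases lt_or_ge ((x - s) / ε) 0 with h | h
      · simp [gd_zero (Or.inl h)]
      rcases lt_or_ge 1 ((x - s) / ε) with h' | h'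
      · simp [gd_zero (Or.inr h')]
      · have hx : x ≤ s + ε := by
          have := (div_le_one hε).mp h'; linarith
        have hB : (1 : ℝ) ≤ (t + ε - x) / ε := (le_div_iff₀ hε).mpr (by linarith)
        rw [Real.smoothTransition.one_of_one_le hB, mul_one]
    have c2 : Real.smoothTransition ((x - s) / ε) * gd ((t + ε - x) / ε) =
        gd ((t + ε - x) / ε) := by
      rcases lt_or_ge ((t + ε - x) / ε) 0 with h | h
      · simp [gd_zero (Or.inl h)]
      rcases lt_or_ge 1 ((t + ε - x) / ε) with h' | h'
      · simp [gd_zero (Or.inr h')]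
      · have hx : t ≤ x := by
          have := (div_le_one hε).mp h'; linarith
        have hA : (1 : ℝ) ≤ (x - s) / ε := (le_div_iff₀ hε).mpr (by linarith)
        rw [Real.smoothTransition.one_of_one_le hA, one_mul]
    rw [(hdd x).deriv, harg]
    have expand : W x * (gd ((x - s) / ε) * (1 / ε) * Real.smoothTransition ((t + ε - x) / ε) +
        Real.smoothTransition ((x - s) / ε) * (gd ((t + ε - x) / ε) * (-1 / ε))) =
        ε⁻¹ * (W x * (gd ((x - s) / ε) * Real.smoothTransition ((t + ε - x) / ε))) -
        ε⁻¹ * (W x * (Real.smoothTransition ((x - s) / ε) * gd ((t + ε - x) / ε))) := by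
      ring
    rw [expand, c1, c2]
  have hint1 : Integrable (fun x => ε⁻¹ * (W x * gd ((x - s) / ε))) :=
    (integrable_mul_gd hW s hεne).const_mul _
  have hint2 : Integrable (fun x => ε⁻¹ * (W x * gd ((x - (t + ε)) / (-ε)))) :=
    (integrable_mul_gd hW (t + ε) (neg_ne_zero.mpr hεne)).const_mul _
  have hsplit : ∫ x, W x * deriv ψ x =
      (ε⁻¹ * ∫ x, W x * gd ((x - s) / ε)) - ε⁻¹ * ∫ x, W x * gd ((x - (t + ε)) / (-ε)) := by
    simp_rw [hpt]
    rw [integral_sub hint1 hint2, MeasureTheory.integral_const_mul,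
      MeasureTheory.integral_const_mul]
  rw [hsplit, subst_lemma W s hεne, subst_lemma W (t + ε) (neg_ne_zero.mpr hεne),
    abs_of_pos hε, abs_neg, abs_of_pos hε, ← mul_assoc, ← mul_assoc,
    inv_mul_cancel₀ hεne, one_mul, one_mul] at key
  linarith

lemma mono_core {T : ℝ} {W : ℝ → ℝ} (hW : Continuous W)
    (H : ∀ ψ : ℝ → ℝ, ContDiff ℝ 1 ψ → (∀ x, 0 ≤ ψ x) → HasCompactSupport ψ →
      tsupport ψ ⊆ Ioo 0 T → 0 ≤ ∫ x, W x * deriv ψ x)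
    {s t : ℝ} (hs : 0 < s) (hst : s < t) (ht : t < T) : W t ≤ W s := by
  have hid : Tendsto (fun ε : ℝ => ε) (𝓝[>] (0:ℝ)) (𝓝 0) :=
    (continuous_id.tendsto 0).mono_left nhdsWithin_le_nhds
  have hBs : Tendsto (fun ε => ∫ u, W (s + ε * u) * gd u) (𝓝[>] (0:ℝ)) (𝓝 (W s)) :=
    moll_tendsto hW s (fun _ => s) (fun ε => ε) tendsto_const_nhds hid
  have hBt : Tendsto (fun ε => ∫ u, W ((t + ε) + (-ε) * u) * gd u) (𝓝[>] (0:ℝ)) (𝓝 (W t)) := by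
    apply moll_tendsto hW t (fun ε => t + ε) (fun ε => -ε)
    · simpa using tendsto_const_nhds.add hid
    · simpa using hid.neg
  refine le_of_tendsto_of_tendsto hBt hBs ?_
  have hδ : Ioo (0:ℝ) (min (t - s) (T - t)) ∈ 𝓝[>] (0:ℝ) :=
    Ioo_mem_nhdsGT_of_mem ⟨le_refl 0, lt_min (by linarith) (by linarith)⟩
  filter_upwards [hδ] with ε hε
  have hε1 : ε < t - s := lt_of_lt_of_le hε.2 (min_le_left _ _)
  have hε2 : ε < T - t := lt_of_lt_of_le hε.2 (min_le_right _ _)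
  exact step_eps hW H hs hε.1 (by linarith) (by linarith)

open MeasureTheory Real Set Filter Topology Function

/-- A distributional Grönwall-type lemma: if `∫ V φ' ≥ c ∫ V φ` for all nonnegative
`φ ∈ C_c^1((0,T))`, then `V(t) ≤ V(0) e^{−ct}` on `[0,T]`. -/
theorem stmt_10 (T : ℝ) (hT : 0 < T) (c : ℝ) (hc : 0 < c)
    (V : ℝ → ℝ) (hcont : ContinuousOn V (Set.Icc 0 T))
    (hnonneg : ∀ t ∈ Set.Icc 0 T, 0 ≤ V t)
    (hineq : ∀ φ : ℝ → ℝ, ContDiff ℝ 1 φ → (∀ t, 0 ≤ φ t) →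
      HasCompactSupport φ → tsupport φ ⊆ Set.Ioo 0 T →
      c * ∫ t in Set.Ioo 0 T, V t * φ t ≤ ∫ t in Set.Ioo 0 T, V t * deriv φ t) :
    ∀ t ∈ Set.Icc 0 T, V t ≤ V 0 * Real.exp (-c * t) := by
  set Vc : ℝ → ℝ := fun x => V (min T (max 0 x)) with hVcdef
  have hmem : ∀ x : ℝ, min T (max 0 x) ∈ Icc 0 T := fun x =>
    ⟨le_min hT.le (le_max_left 0 x), min_le_left _ _⟩
  have hVc : Continuous Vc :=
    hcont.comp_continuous (continuous_const.min (continuous_const.max continuous_id)) hmem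
  have hVceq : ∀ x ∈ Icc (0:ℝ) T, Vc x = V x := by
    intro x hx
    simp only [hVcdef]
    rw [max_eq_right hx.1, min_eq_right hx.2]
  set W : ℝ → ℝ := fun x => Real.exp (c * x) * Vc x with hWdef
  have hWc : Continuous W := (Real.continuous_exp.comp (continuous_const.mul continuous_id)).mul hVc
  -- the distributional hypothesis for W
  have H : ∀ ψ : ℝ → ℝ, ContDiff ℝ 1 ψ → (∀ x, 0 ≤ ψ x) → HasCompactSupport ψ →
      tsupport ψ ⊆ Ioo 0 T → 0 ≤ ∫ x, W x * deriv ψ x := by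
    intro ψ h1 h2 h3 h4
    set φ : ℝ → ℝ := fun x => Real.exp (c * x) * ψ x with hφdef
    have hφ1 : ContDiff ℝ 1 φ :=
      (Real.contDiff_exp.comp (contDiff_const.mul contDiff_id)).mul h1
    have hφ2 : ∀ x, 0 ≤ φ x := fun x => mul_nonneg (Real.exp_nonneg _) (h2 x)
    have hφ3 : HasCompactSupport φ := h3.mul_left
    have hφ4 : tsupport φ ⊆ Ioo 0 T := Set.Subset.trans tsupport_mul_subset_right h4
    have key := hineq φ hφ1 hφ2 hφ3 hφ4
    have hψd : Differentiable ℝ ψ := h1.differentiable (by simp)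
    have hφderiv : ∀ x, deriv φ x = Real.exp (c * x) * c * ψ x + Real.exp (c * x) * deriv ψ x := by
      intro x
      have he : HasDerivAt (fun x : ℝ => Real.exp (c * x)) (Real.exp (c * x) * c) x := by
        have := (Real.hasDerivAt_exp (c * x)).comp x ((hasDerivAt_id x).const_mul c)
        exact this.congr_deriv (by ring)
      exact ((he.mul (hψd x).hasDerivAt)).deriv
    have hψdc : Continuous (deriv ψ) := h1.continuous_deriv le_rfl
    have hφc : Continuous φ := hφ1.continuous
    -- integrability on Ioo 0 T
    have hi1 : IntegrableOn (fun x => c * (V x * φ x)) (Ioo 0 T) := by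
      apply IntegrableOn.mono_set _ Ioo_subset_Icc_self
      exact ((hcont.mul hφc.continuousOn).integrableOn_Icc).const_mul c
    have hi2 : IntegrableOn (fun x => W x * deriv ψ x) (Ioo 0 T) := by
      apply IntegrableOn.mono_set _ Ioo_subset_Icc_self
      exact ((hWc.mul hψdc).continuousOn).integrableOn_Icc
    have hsplit : ∫ x in Ioo 0 T, V x * deriv φ x =
        (∫ x in Ioo 0 T, c * (V x * φ x)) + ∫ x in Ioo 0 T, W x * deriv ψ x := by
      rw [← integral_add hi1 hi2]
      apply setIntegral_congr_fun measurableSet_Ioo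
      intro x hx
      have hV : Vc x = V x := hVceq x (Ioo_subset_Icc_self hx)
      simp only [hφderiv x]
      simp only [hφderiv x, hWdef, hφdef, hV]
      ring
    have hconst : ∫ x in Ioo 0 T, c * (V x * φ x) = c * ∫ x in Ioo 0 T, V x * φ x :=
      MeasureTheory.integral_const_mul c _
    have h0 : 0 ≤ ∫ x in Ioo 0 T, W x * deriv ψ x := by
      rw [hsplit, hconst] at key
      linarith
    rwa [setIntegral_eq_integral_of_forall_compl_eq_zero] at h0
    intro x hx
    have : deriv ψ x = 0 := by
      by_contra h
      exact hx (h4 (support_deriv_subset (by simpa [Function.mem_support] using h)))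
    simp [this]
  -- monotonicity of W on [0, T]
  have core : ∀ s t : ℝ, 0 < s → s < t → t < T → W t ≤ W s := fun s t hs hst ht =>
    mono_core hWc H hs hst ht
  have step2 : ∀ t ∈ Ioo (0:ℝ) T, W t ≤ W 0 := by
    intro t ht
    have htd : Tendsto W (𝓝[>] (0:ℝ)) (𝓝 (W 0)) :=
      (hWc.tendsto 0).mono_left nhdsWithin_le_nhds
    refine ge_of_tendsto htd ?_
    filter_upwards [Ioo_mem_nhdsGT_of_mem ⟨le_refl (0:ℝ), ht.1⟩] with s hs
    exact core s t hs.1 hs.2 ht.2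
  have step3 : W T ≤ W 0 := by
    have htd : Tendsto W (𝓝[<] T) (𝓝 (W T)) :=
      (hWc.tendsto T).mono_left nhdsWithin_le_nhds
    refine le_of_tendsto htd ?_
    filter_upwards [Ioo_mem_nhdsLT_of_mem ⟨hT, le_refl T⟩] with s hs
    exact step2 s hs
  -- conclude
  intro t ht
  have hWle : W t ≤ W 0 := by
    rcases eq_or_lt_of_le ht.1 with h0 | h0
    · rw [← h0]
    rcases eq_or_lt_of_le ht.2 with h1 | h1
    · rw [h1]; exact step3
    · exact step2 t ⟨h0, h1⟩
  have hV0 : Vc 0 = V 0 := hVceq 0 ⟨le_refl 0, hT.le⟩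
  have hVt : Vc t = V t := hVceq t ht
  simp only [hWdef, hV0, hVt, mul_zero, Real.exp_zero, one_mul] at hWle
  have hexp : Real.exp (-c * t) * Real.exp (c * t) = 1 := by
    rw [← Real.exp_add]; ring_nf; exact Real.exp_zero
  calc V t = Real.exp (-c * t) * (Real.exp (c * t) * V t) := by
        rw [← mul_assoc, hexp, one_mul]
  _ ≤ Real.exp (-c * t) * V 0 := by
        apply mul_le_mul_of_nonneg_left hWle (Real.exp_nonneg _)
  _ = V 0 * Real.exp (-c * t) := mul_comm _ _
end

section
/- Let T > 0, let c ≥ 0, and let F : [0,T] → ℝ be continuous. Assume that for every nonnegative continuously differentiable function φ with compact support contained in the open interval (0,T), one has ∫_0^T F(t) φ'(t) dt ≥ c ∫_0^T F(t) φ(t) dt. Then for all 0 ≤ t₁ ≤ t₂ ≤ T one has F(t₂) − F(t₁) ≤ −c ∫_{t₁}^{t₂} F(t) dt. -/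
open MeasureTheory Filter Set Topology

noncomputable section StmtAuxForStmt11


/-- derivative of smoothTransition vanishes off `(0,1)` -/
lemma st_deriv_zero {y : ℝ} (h : y ≤ 0 ∨ 1 ≤ y) :
    deriv Real.smoothTransition y = 0 := by
  rcases h with h | h
  · rcases h.lt_or_eq with h | h
    · have he : Real.smoothTransition =ᶠ[nhds y] (fun _ => (0:ℝ)) := by
        filter_upwards [Iio_mem_nhds h] with x hx
        exact Real.smoothTransition.zero_of_nonpos (le_of_lt hx)
      rw [he.deriv_eq, deriv_const]
    · subst h
      apply IsLocalMin.deriv_eq_zero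
      refine Filter.Eventually.of_forall fun x => ?_
      simpa [Real.smoothTransition.zero] using Real.smoothTransition.nonneg x
  · rcases h.lt_or_eq with h | h
    · have he : Real.smoothTransition =ᶠ[nhds y] (fun _ => (1:ℝ)) := by
        filter_upwards [Ioi_mem_nhds h] with x hx
        exact Real.smoothTransition.one_of_one_le (le_of_lt hx)
      rw [he.deriv_eq, deriv_const]
    · subst h
      apply IsLocalMax.deriv_eq_zero
      refine Filter.Eventually.of_forall fun x => ?_
      simpa [Real.smoothTransition.one] using Real.smoothTransition.le_one x

lemma st_mem_of_deriv_ne {y : ℝ} (h : deriv Real.smoothTransition y ≠ 0) :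
    0 < y ∧ y < 1 := by
  by_contra hc
  push_neg at hc
  rcases lt_or_ge 0 y with h0 | h0
  · exact h (st_deriv_zero (Or.inr (hc h0)))
  · exact h (st_deriv_zero (Or.inl h0))

lemma st_deriv_cont : Continuous (deriv Real.smoothTransition) :=
  (Real.smoothTransition.contDiff (n := 1)).continuous_deriv le_rfl

lemma st_deriv_integrable : Integrable (deriv Real.smoothTransition) := by
  apply st_deriv_cont.integrable_of_hasCompactSupport
  apply HasCompactSupport.intro (isCompact_Icc (a := (0:ℝ)) (b := 1))
  intro y hy
  apply st_deriv_zero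
  rcases lt_or_ge y 0 with h | h
  · exact Or.inl h.le
  · refine Or.inr ?_
    by_contra h1
    exact hy ⟨h, le_of_not_ge h1⟩

lemma st_deriv_integral : ∫ y, deriv Real.smoothTransition y = 1 := by
  rw [← intervalIntegral.integral_eq_integral_of_support_subset
    (a := (0:ℝ)) (b := 1) ?_]
  · rw [intervalIntegral.integral_deriv_eq_sub
      (fun x _ => ((Real.smoothTransition.contDiff (n := 1)).differentiable
        one_ne_zero).differentiableAt) (st_deriv_cont.intervalIntegrable 0 1)]
    simp [Real.smoothTransition.one, Real.smoothTransition.zero]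
  · intro y hy
    have := st_mem_of_deriv_ne hy
    exact ⟨this.1, this.2.le⟩



/-- mollifier limit -/
lemma st_moll (G : ℝ → ℝ) (hG : Continuous G) (a α : ℝ) :
    Tendsto (fun n : ℕ => ∫ y, G ((y + ((n : ℝ) * a + α)) / n) *
      deriv Real.smoothTransition y) atTop (𝓝 (G a)) := by
  obtain ⟨M, hM⟩ : ∃ M, ∀ x ∈ Set.Icc (a - (1 + |α|)) (a + (1 + |α|)), ‖G x‖ ≤ M :=
    isCompact_Icc.exists_bound_of_continuousOn hG.continuousOn
  have key : Tendsto (fun n : ℕ => ∫ y, G ((y + ((n : ℝ) * a + α)) / n) *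
      deriv Real.smoothTransition y) atTop
      (𝓝 (∫ y, G a * deriv Real.smoothTransition y)) := by
    apply tendsto_integral_filter_of_dominated_convergence
      (bound := fun y => M * |deriv Real.smoothTransition y|)
    · refine Filter.Eventually.of_forall fun n => ?_
      exact ((hG.comp (by continuity)).mul st_deriv_cont).aestronglyMeasurable
    · filter_upwards [eventually_ge_atTop 1] with n hn
      refine Filter.Eventually.of_forall fun y => ?_
      rcases eq_or_ne (deriv Real.smoothTransition y) 0 with hd | hd
      · simp [hd, mul_nonneg (le_trans (norm_nonneg (G (a-(1+|α|)))) (hM _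
          (by constructor <;> nlinarith [abs_nonneg α]))) (abs_nonneg
          (deriv Real.smoothTransition y))]
      · have hy := st_mem_of_deriv_ne hd
        have hn1 : (1:ℝ) ≤ (n:ℝ) := by exact_mod_cast hn
        have hn0 : (0:ℝ) < n := lt_of_lt_of_le one_pos hn1
        have h1 : (y + ((n : ℝ) * a + α)) / n = a + (y + α) / n := by
          field_simp; ring
        have h2 : |(y + α) / (n:ℝ)| ≤ 1 + |α| := by
          rw [abs_div]
          have hy1 : |y + α| ≤ 1 + |α| := by
            calc |y + α| ≤ |y| + |α| := abs_add_le _ _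
            _ ≤ 1 + |α| := by
                have : |y| ≤ 1 := abs_le.2 ⟨by linarith [hy.1], hy.2.le⟩
                linarith
          have hnn : (1:ℝ) ≤ |(n:ℝ)| := by rwa [abs_of_pos hn0]
          calc |y + α| / |(n:ℝ)| ≤ |y + α| := div_le_self (abs_nonneg _) hnn
          _ ≤ 1 + |α| := hy1
        have harg : (y + ((n : ℝ) * a + α)) / n ∈
            Set.Icc (a - (1 + |α|)) (a + (1 + |α|)) := by
          rw [h1]
          obtain ⟨hl, hr⟩ := abs_le.1 h2
          exact ⟨by linarith, by linarith⟩
        rw [norm_mul]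
        exact mul_le_mul_of_nonneg_right (hM _ harg) (abs_nonneg _)
    · exact st_deriv_integrable.abs.const_mul M
    · refine Filter.Eventually.of_forall fun y => ?_
      have harg : Tendsto (fun n : ℕ => (y + ((n : ℝ) * a + α)) / n) atTop (𝓝 a) := by
        have h0 : Tendsto (fun n : ℕ => a + (y + α) / n) atTop (𝓝 a) := by
          have := tendsto_const_div_atTop_nhds_zero_nat (y + α)
          simpa using tendsto_const_nhds.add this
        apply h0.congr'
        filter_upwards [eventually_ge_atTop 1] with n hn
        have hn0 : ((n:ℝ)) ≠ 0 := by positivity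
        field_simp; ring
      exact ((hG.continuousAt.tendsto).comp harg).mul tendsto_const_nhds
  simpa [integral_const_mul, st_deriv_integral] using key

/-- substitution -/
lemma st_subst (G : ℝ → ℝ) (r q : ℝ) (hr : 0 < r) :
    ∫ x, G x * (r * deriv Real.smoothTransition (r * x + q))
      = ∫ y, G ((y - q) / r) * deriv Real.smoothTransition y := by
  set f : ℝ → ℝ := fun y => G ((y - q) / r) * deriv Real.smoothTransition y with hf
  have h1 : ∀ x, G x * (r * deriv Real.smoothTransition (r * x + q))
      = r * f (r * x + q) := by
    intro x
    have : (r * x + q - q) / r = x := by field_simp; ring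
    rw [hf]; simp only [this]; ring
  have h2 : (∫ x, f (r * x + q)) = |r⁻¹| • ∫ y, f y := by
    calc (∫ x, f (r * x + q)) = ∫ x, (fun z => f (z + q)) (r * x) := rfl
    _ = |r⁻¹| • ∫ z, f (z + q) := MeasureTheory.Measure.integral_comp_mul_left (fun z => f (z + q)) r
    _ = |r⁻¹| • ∫ y, f y := by rw [integral_add_right_eq_self]
  calc ∫ x, G x * (r * deriv Real.smoothTransition (r * x + q))
      = ∫ x, r * f (r * x + q) := by simp only [h1]
  _ = r * ∫ x, f (r * x + q) := integral_const_mul _ _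
  _ = r * (|r⁻¹| • ∫ y, f y) := by rw [h2]
  _ = ∫ y, f y := by
      rw [abs_of_pos (inv_pos.2 hr), smul_eq_mul, ← mul_assoc,
        mul_inv_cancel₀ hr.ne', one_mul]


end StmtAuxForStmt11

set_option maxHeartbeats 2000000 in
/-- If `∫ F φ' ≥ c ∫ F φ` for all nonnegative `φ ∈ C_c^1((0,T))`, then
`F(t₂) − F(t₁) ≤ −c ∫_{t₁}^{t₂} F`. -/
theorem stmt_11 (T : ℝ) (hT : 0 < T) (c : ℝ) (hc : 0 ≤ c)
    (F : ℝ → ℝ) (hcont : ContinuousOn F (Set.Icc 0 T))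
    (hineq : ∀ φ : ℝ → ℝ, ContDiff ℝ 1 φ → (∀ t, 0 ≤ φ t) →
      HasCompactSupport φ → tsupport φ ⊆ Set.Ioo 0 T →
      c * ∫ t in Set.Ioo 0 T, F t * φ t ≤ ∫ t in Set.Ioo 0 T, F t * deriv φ t) :
    ∀ t₁ t₂ : ℝ, 0 ≤ t₁ → t₁ ≤ t₂ → t₂ ≤ T →
      F t₂ - F t₁ ≤ -c * ∫ t in t₁..t₂, F t := by
  intro t₁ t₂ ht₁ h₁₂ h₂T
  rcases eq_or_lt_of_le h₁₂ with rfl | hlt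
  · simp
  have h01 : t₁ ∈ Set.Icc (0:ℝ) T := ⟨ht₁, le_trans h₁₂ h₂T⟩
  have h02 : t₂ ∈ Set.Icc (0:ℝ) T := ⟨le_trans ht₁ h₁₂, h₂T⟩
  -- the clamped extension of F
  set G : ℝ → ℝ := fun x => F (max 0 (min x T)) with hGdef
  have hmem : ∀ x : ℝ, max 0 (min x T) ∈ Set.Icc (0:ℝ) T :=
    fun x => ⟨le_max_left _ _, max_le hT.le (min_le_right _ _)⟩
  have hG : Continuous G :=
    hcont.comp_continuous (continuous_const.max (continuous_id.min continuous_const)) hmem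
  have hGeq : ∀ x ∈ Set.Icc (0:ℝ) T, G x = F x := by
    intro x hx
    simp only [hGdef, min_eq_left hx.2, max_eq_right hx.1]
  -- the test functions
  set φ : ℕ → ℝ → ℝ := fun n x =>
    Real.smoothTransition ((n:ℝ) * x + -((n:ℝ) * t₁ + 1)) -
    Real.smoothTransition ((n:ℝ) * x + -((n:ℝ) * t₂ + -2)) with hφdef
  have hφcont : ∀ n : ℕ, Continuous (φ n) := by
    intro n
    apply Continuous.sub <;>
      exact Real.smoothTransition.continuous.comp ((continuous_const.mul continuous_id).add continuous_const)
  have hφc1 : ∀ n : ℕ, ContDiff ℝ 1 (φ n) := by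
    intro n
    have haff : ∀ q : ℝ, ContDiff ℝ 1 (fun x : ℝ => (n:ℝ) * x + q) := fun q =>
      (contDiff_const.mul contDiff_id).add contDiff_const
    exact ((Real.smoothTransition.contDiff).comp (haff _)).sub
      ((Real.smoothTransition.contDiff).comp (haff _))
  have hasD : ∀ (r q x : ℝ), HasDerivAt (fun x => Real.smoothTransition (r * x + q))
      (r * deriv Real.smoothTransition (r * x + q)) x := by
    intro r q x
    have h1 : HasDerivAt (fun x : ℝ => r * x + q) r x := by
      simpa using ((hasDerivAt_id x).const_mul r).add_const q
    have h2 : HasDerivAt Real.smoothTransition (deriv Real.smoothTransition (r * x + q)) (r * x + q) :=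
      (((Real.smoothTransition.contDiff (n := 1)).differentiable one_ne_zero)
        (r * x + q)).hasDerivAt
    rw [mul_comm]; exact h2.comp x h1
  have hφderiv : ∀ (n : ℕ) (x : ℝ), deriv (φ n) x =
      (n:ℝ) * deriv Real.smoothTransition ((n:ℝ) * x + -((n:ℝ) * t₁ + 1)) -
      (n:ℝ) * deriv Real.smoothTransition ((n:ℝ) * x + -((n:ℝ) * t₂ + -2)) :=
    fun n x => ((hasD n _ x).sub (hasD n _ x)).deriv
  -- basic per-n facts given n large
  have hφnn : ∀ n : ℕ, (4:ℝ) ≤ (n:ℝ) * (t₂ - t₁) → ∀ t, 0 ≤ φ n t := by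
    intro n h4 t
    rcases le_or_gt ((n:ℝ) * t + -((n:ℝ) * t₂ + -2)) 0 with h | h
    · rw [hφdef]
      simp only
      rw [Real.smoothTransition.zero_of_nonpos h, sub_zero]
      exact Real.smoothTransition.nonneg _
    · have hu : (1:ℝ) ≤ (n:ℝ) * t + -((n:ℝ) * t₁ + 1) := by nlinarith
      rw [hφdef]
      simp only
      rw [Real.smoothTransition.one_of_one_le hu]
      linarith [Real.smoothTransition.le_one ((n:ℝ) * t + -((n:ℝ) * t₂ + -2))]
  have hφsupp : ∀ n : ℕ, (4:ℝ) ≤ (n:ℝ) * (t₂ - t₁) →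
      ∀ x, x ∉ Set.Icc (t₁ + 1 / (n:ℝ)) (t₂ - 1 / (n:ℝ)) → φ n x = 0 := by
    intro n h4 x hx
    have hr : (0:ℝ) < n := by nlinarith
    have hinv : (n:ℝ) * (1 / (n:ℝ)) = 1 := by field_simp
    simp only [Set.mem_Icc, not_and_or, not_le] at hx
    rw [hφdef]; simp only
    rcases hx with hx | hx
    · have hm := mul_lt_mul_of_pos_left hx hr
      have h1 : (n:ℝ) * x + -((n:ℝ) * t₁ + 1) ≤ 0 := by nlinarith
      have h2 : (n:ℝ) * x + -((n:ℝ) * t₂ + -2) ≤ 0 := by nlinarith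
      rw [Real.smoothTransition.zero_of_nonpos h1,
        Real.smoothTransition.zero_of_nonpos h2, sub_zero]
    · have hm := mul_lt_mul_of_pos_left hx hr
      have h1 : (1:ℝ) ≤ (n:ℝ) * x + -((n:ℝ) * t₁ + 1) := by nlinarith
      have h2 : (1:ℝ) ≤ (n:ℝ) * x + -((n:ℝ) * t₂ + -2) := by nlinarith
      rw [Real.smoothTransition.one_of_one_le h1,
        Real.smoothTransition.one_of_one_le h2, sub_self]
  -- threshold
  obtain ⟨N₀, hN₀⟩ := exists_nat_gt (4 / (t₂ - t₁))
  have hbig : ∀ n : ℕ, N₀ ≤ n → (4:ℝ) ≤ (n:ℝ) * (t₂ - t₁) := by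
    intro n hn
    have h1 : (N₀:ℝ) ≤ (n:ℝ) := by exact_mod_cast hn
    have h2 : 4 / (t₂ - t₁) < (n:ℝ) := lt_of_lt_of_le hN₀ h1
    rw [div_lt_iff₀ (by linarith)] at h2
    nlinarith
  -- the inequality for large n
  have hkey : ∀ᶠ n : ℕ in atTop,
      c * ∫ t in Set.Ioo 0 T, F t * φ n t ≤ ∫ t in Set.Ioo 0 T, F t * deriv (φ n) t := by
    filter_upwards [eventually_ge_atTop N₀] with n hn
    have h4 := hbig n hn
    have hr : (0:ℝ) < n := by nlinarith
    have hIccsub : Set.Icc (t₁ + 1 / (n:ℝ)) (t₂ - 1 / (n:ℝ)) ⊆ Set.Ioo 0 T := by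
      intro x hx
      have hp : 0 < 1 / (n:ℝ) := by positivity
      exact ⟨by linarith [hx.1], by linarith [hx.2]⟩
    refine hineq (φ n) (hφc1 n) (hφnn n h4) ?_ ?_
    · exact HasCompactSupport.intro isCompact_Icc (hφsupp n h4)
    · have hts : tsupport (φ n) ⊆ Set.Icc (t₁ + 1 / (n:ℝ)) (t₂ - 1 / (n:ℝ)) := by
        apply closure_minimal _ isClosed_Icc
        intro x hx
        by_contra hmemx
        exact hx (hφsupp n h4 x hmemx)
      exact hts.trans hIccsub

  -- replacing F by G in the set integrals
  have hFG_Ioo : ∀ h : ℝ → ℝ,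
      (∫ x in Set.Ioo 0 T, F x * h x) = ∫ x in Set.Ioo 0 T, G x * h x := by
    intro h
    apply setIntegral_congr_fun measurableSet_Ioo
    intro x hx
    simp only [hGeq x ⟨hx.1.le, hx.2.le⟩]
  have hIntAff : ∀ (r q : ℝ),
      IntegrableOn (fun x => G x * (r * deriv Real.smoothTransition (r * x + q)))
        (Set.Ioo 0 T) volume := by
    intro r q
    have hco : Continuous fun x => G x * (r * deriv Real.smoothTransition (r * x + q)) :=
      hG.mul (continuous_const.mul (st_deriv_cont.comp
        ((continuous_const.mul continuous_id).add continuous_const)))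
    exact (hco.integrableOn_Icc (a := 0) (b := T)).mono_set Set.Ioo_subset_Icc_self
  have hvanish₁ : ∀ n : ℕ, (4:ℝ) ≤ (n:ℝ) * (t₂ - t₁) → ∀ x, x ∉ Set.Ioo 0 T →
      G x * ((n:ℝ) * deriv Real.smoothTransition ((n:ℝ) * x + -((n:ℝ) * t₁ + 1))) = 0 := by
    intro n h4 x hx
    have hr : (0:ℝ) < n := by nlinarith
    rcases eq_or_ne (deriv Real.smoothTransition ((n:ℝ) * x + -((n:ℝ) * t₁ + 1))) 0 with h | h
    · rw [h]; ring
    · exfalso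
      apply hx
      obtain ⟨ha, hb⟩ := st_mem_of_deriv_ne h
      have hT1 : (0:ℝ) ≤ (n:ℝ) * t₁ := mul_nonneg hr.le ht₁
      have hT2 : (n:ℝ) * t₂ ≤ (n:ℝ) * T := mul_le_mul_of_nonneg_left h₂T hr.le
      exact ⟨by nlinarith, by nlinarith⟩
  have hvanish₂ : ∀ n : ℕ, (4:ℝ) ≤ (n:ℝ) * (t₂ - t₁) → ∀ x, x ∉ Set.Ioo 0 T →
      G x * ((n:ℝ) * deriv Real.smoothTransition ((n:ℝ) * x + -((n:ℝ) * t₂ + -2))) = 0 := by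
    intro n h4 x hx
    have hr : (0:ℝ) < n := by nlinarith
    rcases eq_or_ne (deriv Real.smoothTransition ((n:ℝ) * x + -((n:ℝ) * t₂ + -2))) 0 with h | h
    · rw [h]; ring
    · exfalso
      apply hx
      obtain ⟨ha, hb⟩ := st_mem_of_deriv_ne h
      have hT1 : (0:ℝ) ≤ (n:ℝ) * t₁ := mul_nonneg hr.le ht₁
      have hT2 : (n:ℝ) * t₂ ≤ (n:ℝ) * T := mul_le_mul_of_nonneg_left h₂T hr.le
      exact ⟨by nlinarith, by nlinarith⟩
  -- limit of the right-hand sides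
  have hRHSlim : Tendsto (fun n : ℕ => ∫ t in Set.Ioo 0 T, F t * deriv (φ n) t) atTop
      (𝓝 (G t₁ - G t₂)) := by
    have hlim := (st_moll G hG t₁ 1).sub (st_moll G hG t₂ (-2))
    apply hlim.congr'
    filter_upwards [eventually_ge_atTop N₀] with n hn
    have h4 := hbig n hn
    have hr : (0:ℝ) < n := by nlinarith
    have e1 : (∫ t in Set.Ioo 0 T, F t * deriv (φ n) t)
        = ∫ t in Set.Ioo 0 T, G t * deriv (φ n) t := hFG_Ioo _
    have e2 : (∫ t in Set.Ioo 0 T, G t * deriv (φ n) t)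
        = (∫ t in Set.Ioo 0 T,
            G t * ((n:ℝ) * deriv Real.smoothTransition ((n:ℝ) * t + -((n:ℝ) * t₁ + 1))))
          - ∫ t in Set.Ioo 0 T,
            G t * ((n:ℝ) * deriv Real.smoothTransition ((n:ℝ) * t + -((n:ℝ) * t₂ + -2))) := by
      rw [← integral_sub (hIntAff _ _) (hIntAff _ _)]
      apply setIntegral_congr_fun measurableSet_Ioo
      intro x _
      simp only [hφderiv n]; ring
    have e3 : (∫ t in Set.Ioo 0 T,
          G t * ((n:ℝ) * deriv Real.smoothTransition ((n:ℝ) * t + -((n:ℝ) * t₁ + 1))))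
        = ∫ y, G ((y + ((n:ℝ) * t₁ + 1)) / n) * deriv Real.smoothTransition y := by
      rw [setIntegral_eq_integral_of_forall_compl_eq_zero (hvanish₁ n h4),
        st_subst G n _ hr]
      simp only [sub_neg_eq_add]
    have e4 : (∫ t in Set.Ioo 0 T,
          G t * ((n:ℝ) * deriv Real.smoothTransition ((n:ℝ) * t + -((n:ℝ) * t₂ + -2))))
        = ∫ y, G ((y + ((n:ℝ) * t₂ + -2)) / n) * deriv Real.smoothTransition y := by
      rw [setIntegral_eq_integral_of_forall_compl_eq_zero (hvanish₂ n h4),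
        st_subst G n _ hr]
      simp only [sub_neg_eq_add]
    rw [e1, e2, e3, e4]
  -- limit of the left-hand sides
  have hind : Tendsto (fun n : ℕ => ∫ x in Set.Ioo 0 T, G x * φ n x) atTop
      (𝓝 (∫ x in Set.Ioo 0 T, (Set.Ioo t₁ t₂).indicator G x)) := by
    apply tendsto_integral_filter_of_dominated_convergence (bound := fun x => |G x|)
    · exact Filter.Eventually.of_forall fun n => (hG.mul (hφcont n)).aestronglyMeasurable
    · filter_upwards [eventually_ge_atTop N₀] with n hn
      have h4 := hbig n hn
      refine Filter.Eventually.of_forall fun x => ?_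
      have h0 := hφnn n h4 x
      have h1 : φ n x ≤ 1 := by
        rw [hφdef]
        simp only
        have hu := Real.smoothTransition.le_one ((n:ℝ) * x + -((n:ℝ) * t₁ + 1))
        have hv := Real.smoothTransition.nonneg ((n:ℝ) * x + -((n:ℝ) * t₂ + -2))
        linarith
      rw [Real.norm_eq_abs, abs_mul]
      calc |G x| * |φ n x| ≤ |G x| * 1 := by
            refine mul_le_mul_of_nonneg_left ?_ (abs_nonneg _)
            rw [abs_of_nonneg h0]; exact h1
      _ = |G x| := mul_one _
    · exact (hG.abs.integrableOn_Icc (a := 0) (b := T)).mono_set Set.Ioo_subset_Icc_self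
    · refine Filter.Eventually.of_forall fun x => ?_
      rcases lt_or_ge t₁ x with hx1 | hx1
      · rcases lt_or_ge x t₂ with hx2 | hx2
        · rw [Set.indicator_of_mem (show x ∈ Set.Ioo t₁ t₂ from ⟨hx1, hx2⟩) G]
          refine Filter.Tendsto.congr' ?_ (tendsto_const_nhds (x := G x))
          have h1 : ∀ᶠ n : ℕ in atTop, (2:ℝ) ≤ (n:ℝ) * (x - t₁) :=
            (tendsto_natCast_atTop_atTop.atTop_mul_const
              (by linarith : (0:ℝ) < x - t₁)).eventually_ge_atTop 2
          have h2 : ∀ᶠ n : ℕ in atTop, (2:ℝ) ≤ (n:ℝ) * (t₂ - x) :=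
            (tendsto_natCast_atTop_atTop.atTop_mul_const
              (by linarith : (0:ℝ) < t₂ - x)).eventually_ge_atTop 2
          filter_upwards [h1, h2] with n hn1 hn2
          rw [hφdef]
          simp only
          rw [Real.smoothTransition.one_of_one_le (by nlinarith),
            Real.smoothTransition.zero_of_nonpos (by nlinarith)]
          ring
        · rw [Set.indicator_of_notMem (fun hmem => absurd hmem.2 (not_lt.2 hx2))]
          refine Filter.Tendsto.congr' ?_ (tendsto_const_nhds (x := (0:ℝ)))
          have h1 : ∀ᶠ n : ℕ in atTop, (2:ℝ) ≤ (n:ℝ) * (x - t₁) :=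
            (tendsto_natCast_atTop_atTop.atTop_mul_const
              (by linarith : (0:ℝ) < x - t₁)).eventually_ge_atTop 2
          filter_upwards [h1] with n hn1
          have hvone : (1:ℝ) ≤ (n:ℝ) * x + -((n:ℝ) * t₂ + -2) := by
            have := mul_nonneg (Nat.cast_nonneg n : (0:ℝ) ≤ n) (by linarith : (0:ℝ) ≤ x - t₂)
            nlinarith
          rw [hφdef]
          simp only
          rw [Real.smoothTransition.one_of_one_le (by nlinarith),
            Real.smoothTransition.one_of_one_le hvone]
          ring
      · rw [Set.indicator_of_notMem (fun hmem => absurd hmem.1 (not_lt.2 hx1))]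
        refine Filter.Tendsto.congr' ?_ (tendsto_const_nhds (x := (0:ℝ)))
        have h2 : ∀ᶠ n : ℕ in atTop, (2:ℝ) ≤ (n:ℝ) * (t₂ - x) :=
          (tendsto_natCast_atTop_atTop.atTop_mul_const
            (by linarith : (0:ℝ) < t₂ - x)).eventually_ge_atTop 2
        filter_upwards [h2] with n hn2
        have huzero : (n:ℝ) * x + -((n:ℝ) * t₁ + 1) ≤ 0 := by
          have := mul_nonneg (Nat.cast_nonneg n : (0:ℝ) ≤ n) (by linarith : (0:ℝ) ≤ t₁ - x)
          nlinarith
        rw [hφdef]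
        simp only
        rw [Real.smoothTransition.zero_of_nonpos huzero,
          Real.smoothTransition.zero_of_nonpos (by nlinarith)]
        ring
  have hient : (∫ x in Set.Ioo 0 T, (Set.Ioo t₁ t₂).indicator G x) = ∫ t in t₁..t₂, G t := by
    rw [setIntegral_indicator measurableSet_Ioo,
      Set.inter_eq_self_of_subset_right (Set.Ioo_subset_Ioo ht₁ h₂T),
      intervalIntegral.integral_of_le hlt.le, integral_Ioc_eq_integral_Ioo]
  have hLHSlim : Tendsto (fun n : ℕ => c * ∫ t in Set.Ioo 0 T, F t * φ n t) atTop
      (𝓝 (c * ∫ t in t₁..t₂, G t)) := by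
    rw [hient] at hind
    refine Filter.Tendsto.congr' ?_ (hind.const_mul c)
    exact Filter.Eventually.of_forall fun n => congrArg (fun z => c * z) (hFG_Ioo (φ n)).symm
  have hmain : c * ∫ t in t₁..t₂, G t ≤ G t₁ - G t₂ :=
    le_of_tendsto_of_tendsto hLHSlim hRHSlim hkey
  have hFGint : (∫ t in t₁..t₂, F t) = ∫ t in t₁..t₂, G t := by
    apply intervalIntegral.integral_congr
    intro x hx
    rw [Set.uIcc_of_le hlt.le] at hx
    exact (hGeq x ⟨le_trans ht₁ hx.1, le_trans hx.2 h₂T⟩).symm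
  rw [hFGint, ← hGeq t₁ h01, ← hGeq t₂ h02, neg_mul]
  linarith [hmain]
end
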